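/- Let F be a probability measure on [0,∞) admitting a bounded density f on (0,∞) with support in [a,b], 0 < a ≤ b, plus a possible point mass at 0, with Stieltjes transform m, and let y, σ > 0. If t = t(z) solves t = y - 1 + y(z - tσ²)m(z - tσ²) for z = u + iv, then as v → ∞, uniformly in u, we have Im(t) → 0 and Re(t) → -1. -/

import Mathlib

open MeasureTheory

open Real Set
open scoped ENNReal NNReal

lemma poisson_int (u s : ℝ) (hs : 0 < s) :
    Integrable (fun x : ℝ => s / ((x - u) ^ 2 + s ^ 2)) ∧
    ∫ x : ℝ, s / ((x - u) ^ 2 + s ^ 2) = π := by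
  have hg : Integrable (fun x : ℝ => (1 + (x / s) ^ 2)⁻¹) :=
    integrable_inv_one_add_sq.comp_div hs.ne'
  have key : ∀ x : ℝ, s / ((x - u) ^ 2 + s ^ 2) = s⁻¹ * (1 + ((x - u) / s) ^ 2)⁻¹ := by
    intro x
    have h2 : (0:ℝ) < (x - u) ^ 2 + s ^ 2 := by positivity
    field_simp
    ring
  constructor
  · simp_rw [key]
    exact (hg.comp_sub_right u).const_mul _
  · calc ∫ x : ℝ, s / ((x - u) ^ 2 + s ^ 2)
        = ∫ x : ℝ, s⁻¹ * (1 + ((x - u) / s) ^ 2)⁻¹ := by simp_rw [key]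
      _ = s⁻¹ * ∫ x : ℝ, (1 + ((x - u) / s) ^ 2)⁻¹ := integral_const_mul _ _
      _ = s⁻¹ * ∫ x : ℝ, (1 + (x / s) ^ 2)⁻¹ := by
            rw [integral_sub_right_eq_self (fun x : ℝ => (1 + (x / s) ^ 2)⁻¹) u]
      _ = s⁻¹ * (|s| • ∫ x : ℝ, (1 + x ^ 2)⁻¹) := by
            rw [MeasureTheory.Measure.integral_comp_div (fun x : ℝ => (1 + x ^ 2)⁻¹) s]
      _ = π := by
            rw [integral_univ_inv_one_add_sq, abs_of_pos hs, smul_eq_mul]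
            field_simp

lemma decomp_integral (c : ℝ) (hc0 : 0 ≤ c) (hc1 : c ≤ 1) (f : ℝ → ℝ)
    (hf_meas : Measurable f) (hf_nonneg : ∀ x, 0 ≤ f x)
    (F : Measure ℝ)
    (hF : F = (ENNReal.ofReal c) • Measure.dirac (0 : ℝ) +
        (ENNReal.ofReal (1 - c)) • (volume.withDensity fun x => ENNReal.ofReal (f x)))
    (g : ℝ → ℂ) (hg : Measurable g)
    (hint : Integrable (fun x => f x • g x) volume) :
    ∫ x, g x ∂F = (c : ℂ) * g 0 + ((1 - c : ℝ) : ℂ) * ∫ x, f x • g x := by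
  have htn : Measurable fun x => (f x).toNNReal := hf_meas.real_toNNReal
  have hsmul_eq : (fun x => (f x).toNNReal • g x) = fun x => f x • g x := by
    funext x
    rw [NNReal.smul_def, Real.coe_toNNReal _ (hf_nonneg x)]
  have hden : (fun x => ENNReal.ofReal (f x)) = (fun x => ((f x).toNNReal : ℝ≥0∞)) := rfl
  have hint2 : Integrable g (volume.withDensity fun x => ENNReal.ofReal (f x)) := by
    rw [hden, integrable_withDensity_iff_integrable_smul htn, hsmul_eq]
    exact hint
  have hint1 : Integrable g (Measure.dirac (0 : ℝ)) := by
    refine ⟨hg.aestronglyMeasurable, ?_⟩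
    rw [HasFiniteIntegral, lintegral_dirac]
    exact ENNReal.coe_lt_top
  subst hF
  rw [integral_add_measure (hint1.smul_measure ENNReal.ofReal_ne_top)
      (hint2.smul_measure ENNReal.ofReal_ne_top),
    integral_smul_measure, integral_smul_measure, integral_dirac,
    ENNReal.toReal_ofReal hc0, ENNReal.toReal_ofReal (by linarith : (0:ℝ) ≤ 1 - c),
    hden, integral_withDensity_eq_integral_smul htn, hsmul_eq]
  simp [Complex.real_smul]

/-- Let `F = c δ₀ + (1-c)·(f dx)` with `f` a bounded density supported in
`[a,b]`, `0 < a ≤ b`, `0 ≤ c < 1`, and `m` its Stieltjes transform; `y, σ > 0`. If for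
each `z = u + iv`, `t(z)` solves `t = y - 1 + y(z - tσ²)m(z - tσ²)` (with `Im t > 0`,
`Im(z - tσ²) > 0`), then as `v → ∞`, uniformly in `u`, `Im t → 0` and `Re t → -1`. -/
theorem t_limit_as_v_to_infty
    (a b c Cf : ℝ) (ha : 0 < a) (hab : a ≤ b) (hc0 : 0 ≤ c) (hc1 : c < 1)
    (f : ℝ → ℝ) (hf_meas : Measurable f) (hf_nonneg : ∀ x, 0 ≤ f x)
    (hf_bdd : ∀ x, f x ≤ Cf) (hf_supp : ∀ x, x ∉ Set.Icc a b → f x = 0)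
    (F : Measure ℝ)
    (hF : F = (ENNReal.ofReal c) • Measure.dirac (0 : ℝ) +
        (ENNReal.ofReal (1 - c)) • (volume.withDensity fun x => ENNReal.ofReal (f x)))
    (hprob : IsProbabilityMeasure F)
    (y σ : ℝ) (hy : 0 < y) (hσ : 0 < σ)
    (m : ℂ → ℂ) (hm : ∀ w : ℂ, m w = ∫ x, ((x : ℂ) - w)⁻¹ ∂F) :
    ∀ ε > (0 : ℝ), ∃ V : ℝ, ∀ z t : ℂ, V ≤ z.im →
      0 < t.im → 0 < (z - t * (σ : ℂ) ^ 2).im →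
      t = (y : ℂ) - 1 + (y : ℂ) * (z - t * (σ : ℂ) ^ 2) * m (z - t * (σ : ℂ) ^ 2) →
      |t.im| < ε ∧ |t.re + 1| < ε := by
  intro ε hε
  have hb : 0 < b := lt_of_lt_of_le ha hab
  have hCf : 0 ≤ Cf := le_trans (hf_nonneg a) (hf_bdd a)
  have h1c : 0 < 1 - c := by linarith
  -- f is integrable with ∫ f = 1
  have hfint : Integrable f := by
    have hdom : Integrable ((Set.Icc a b).indicator fun _ : ℝ => Cf) volume :=
      (integrable_indicator_iff measurableSet_Icc).2
        (integrableOn_const measure_Icc_lt_top.ne)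
    refine hdom.mono' hf_meas.aestronglyMeasurable ?_
    filter_upwards with x
    by_cases hx : x ∈ Set.Icc a b
    · rw [Set.indicator_of_mem hx, Real.norm_eq_abs, abs_of_nonneg (hf_nonneg x)]
      exact hf_bdd x
    · rw [Set.indicator_of_notMem hx, hf_supp x hx, norm_zero]
  have hfone : ∫ x, f x = 1 := by
    have h1 := hprob.measure_univ
    rw [hF] at h1
    rw [Measure.add_apply, Measure.smul_apply, Measure.smul_apply, smul_eq_mul,
      smul_eq_mul, measure_univ, mul_one, withDensity_apply _ MeasurableSet.univ,
      setLIntegral_univ] at h1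
    set L : ℝ≥0∞ := ∫⁻ x, ENNReal.ofReal (f x) with hL
    have hLtop : L ≠ ⊤ := by
      intro htop
      rw [htop, ENNReal.mul_top (by simp [ENNReal.ofReal_eq_zero]; linarith),
        add_top] at h1
      exact ENNReal.top_ne_one h1
    have h2 := congrArg ENNReal.toReal h1
    rw [ENNReal.toReal_add (by simp) (ENNReal.mul_ne_top (by simp) hLtop),
      ENNReal.toReal_mul, ENNReal.toReal_ofReal hc0,
      ENNReal.toReal_ofReal h1c.le, ENNReal.toReal_one] at h2
    have hL1 : L.toReal = 1 := by
      have h3 : (1 - c) * L.toReal = (1 - c) * 1 := by linarith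
      exact mul_left_cancel₀ h1c.ne' h3
    rw [integral_eq_lintegral_of_nonneg_ae (Filter.Eventually.of_forall hf_nonneg)
      hf_meas.aestronglyMeasurable, ← hL, hL1]
  -- constants
  set M : ℝ := y * ((1 - c) * (Cf * (b * π))) with hM
  have hM0 : 0 ≤ M := by
    have := pi_pos.le
    positivity
  refine ⟨σ ^ 2 * M + y * b / ε + 1, ?_⟩
  intro z t hv ht hwim heq
  set w : ℂ := z - t * (σ : ℂ) ^ 2 with hwdef
  set s : ℝ := w.im with hsdef
  set u : ℝ := w.re with hudef
  have hs : 0 < s := hwim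
  have hw0 : w ≠ 0 := by
    intro h0
    rw [h0] at hsdef
    simp [hsdef] at hs
  have habs_lb : ∀ x : ℝ, s ≤ ‖(x : ℂ) - w‖ := by
    intro x
    have h1 : |((x : ℂ) - w).im| ≤ ‖(x : ℂ) - w‖ := Complex.abs_im_le_norm _
    have h2 : ((x : ℂ) - w).im = -s := by simp [hsdef]
    rw [h2, abs_neg, abs_of_pos hs] at h1
    exact h1
  have hsub0 : ∀ x : ℝ, ((x : ℂ) - w) ≠ 0 := by
    intro x h0
    have := habs_lb x
    rw [h0, norm_zero] at this
    linarith
  -- generic integrability of f • h for h bounded on [a,b]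
  have key_int : ∀ (h : ℝ → ℂ) (C : ℝ), Measurable h → (∀ x ∈ Set.Icc a b, ‖h x‖ ≤ C) →
      Integrable (fun x => f x • h x) volume := by
    intro h C hmeas hbdd
    have hdom : Integrable ((Set.Icc a b).indicator fun _ : ℝ => Cf * C) volume :=
      (integrable_indicator_iff measurableSet_Icc).2
        (integrableOn_const measure_Icc_lt_top.ne)
    refine hdom.mono' (hf_meas.aestronglyMeasurable.smul hmeas.aestronglyMeasurable) ?_
    filter_upwards with x
    by_cases hx : x ∈ Set.Icc a b
    · rw [Set.indicator_of_mem hx, norm_smul, Real.norm_eq_abs, abs_of_nonneg (hf_nonneg x)]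
      exact mul_le_mul (hf_bdd x) (hbdd x hx) (norm_nonneg _) hCf
    · rw [Set.indicator_of_notMem hx, hf_supp x hx, zero_smul, norm_zero]
  -- the two basic integrands
  have hg1_meas : Measurable fun x : ℝ => ((x : ℂ) - w)⁻¹ :=
    (Complex.measurable_ofReal.sub measurable_const).inv
  have hg1_bdd : ∀ x ∈ Set.Icc a b, ‖((x : ℂ) - w)⁻¹‖ ≤ s⁻¹ := by
    intro x _
    rw [norm_inv]
    exact inv_anti₀ hs (habs_lb x)
  have hint1 : Integrable (fun x => f x • ((x : ℂ) - w)⁻¹) volume :=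
    key_int _ _ hg1_meas hg1_bdd
  set J1 : ℂ := ∫ x : ℝ, f x • ((x : ℂ) - w)⁻¹ with hJ1
  -- decomposition of m w
  have hmw : m w = (c : ℂ) * (((0 : ℝ) : ℂ) - w)⁻¹ + ((1 - c : ℝ) : ℂ) * J1 := by
    rw [hm w]
    exact decomp_integral c hc0 hc1.le f hf_meas hf_nonneg F hF _ hg1_meas hint1
  -- key formula : t + 1 = y (1-c) (1 + w J1)
  have key : t + 1 = ((y * (1 - c) : ℝ) : ℂ) * (1 + w * J1) := by
    rw [heq, hmw]
    rw [Complex.ofReal_zero, zero_sub, inv_neg, mul_neg]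
    push_cast
    field_simp [hw0]
    ring
  -- the J integrand and its properties
  have hh_meas : Measurable fun x : ℝ => (x : ℂ) * ((x : ℂ) - w)⁻¹ :=
    Complex.measurable_ofReal.mul hg1_meas
  have hh_bdd : ∀ x ∈ Set.Icc a b, ‖(x : ℂ) * ((x : ℂ) - w)⁻¹‖ ≤ b / s := by
    intro x hx
    rw [norm_mul, Complex.norm_real, Real.norm_eq_abs,
      norm_inv, div_eq_mul_inv]
    have hxb : |x| ≤ b := by
      rw [abs_of_nonneg (le_of_lt (lt_of_lt_of_le ha hx.1))]; exact hx.2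
    exact mul_le_mul hxb (inv_anti₀ hs (habs_lb x))
      (inv_nonneg.2 (norm_nonneg _)) hb.le
  have hintJ : Integrable (fun x => f x • ((x : ℂ) * ((x : ℂ) - w)⁻¹)) volume :=
    key_int _ _ hh_meas hh_bdd
  set J : ℂ := ∫ x : ℝ, f x • ((x : ℂ) * ((x : ℂ) - w)⁻¹) with hJ
  -- J = ∫f + w J1 = 1 + w J1
  have hsplit : J = 1 + w * J1 := by
    have hpt : ∀ x : ℝ, f x • ((x : ℂ) * ((x : ℂ) - w)⁻¹)
        = f x • (1 : ℂ) + w * (f x • ((x : ℂ) - w)⁻¹) := by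
      intro x
      have h0 := hsub0 x
      rw [Complex.real_smul, Complex.real_smul, Complex.real_smul]
      field_simp
      ring
    have hfun : (fun x : ℝ => f x • ((x : ℂ) * ((x : ℂ) - w)⁻¹))
        = fun x : ℝ => f x • (1 : ℂ) + w * (f x • ((x : ℂ) - w)⁻¹) := funext hpt
    rw [hJ, hfun, integral_add (hfint.smul_const (1 : ℂ)) (hint1.const_mul w),
      integral_smul_const, hfone, integral_const_mul, one_smul, ← hJ1]
  have hkey2 : t + 1 = ((y * (1 - c) : ℝ) : ℂ) * J := by
    rw [key, hsplit]
  -- bound on J.im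
  have hptim : ∀ x : ℝ, (f x • ((x : ℂ) * ((x : ℂ) - w)⁻¹)).im
      = f x * (x * (s / ((x - u) ^ 2 + s ^ 2))) := by
    intro x
    have hns : Complex.normSq ((x : ℂ) - w) = (x - u) ^ 2 + s ^ 2 := by
      rw [Complex.normSq_apply]
      simp only [Complex.sub_re, Complex.sub_im, Complex.ofReal_re, Complex.ofReal_im,
        ← hudef, ← hsdef]
      ring
    have hns0 : (x - u) ^ 2 + s ^ 2 ≠ 0 := by positivity
    rw [Complex.real_smul]
    simp only [Complex.mul_im, Complex.mul_re, Complex.ofReal_re, Complex.ofReal_im,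
      Complex.inv_im, Complex.inv_re, hns, Complex.sub_re, Complex.sub_im, ← hudef, ← hsdef]
    field_simp
    ring
  have hfun2 : (fun x : ℝ => (f x • ((x : ℂ) * ((x : ℂ) - w)⁻¹)).im)
      = fun x : ℝ => f x * (x * (s / ((x - u) ^ 2 + s ^ 2))) := funext hptim
  have hint_im : Integrable (fun x : ℝ => f x * (x * (s / ((x - u) ^ 2 + s ^ 2)))) volume := by
    have h0 := hintJ.im
    simp only [RCLike.im_to_complex] at h0
    rwa [hfun2] at h0
  have hJim : J.im ≤ Cf * (b * π) := by
    have h0 := integral_im (𝕜 := ℂ) (μ := (volume : Measure ℝ)) hintJ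
    simp only [RCLike.im_to_complex] at h0
    have h1 : J.im = ∫ x : ℝ, f x * (x * (s / ((x - u) ^ 2 + s ^ 2))) := by
      rw [hJ, ← h0, hfun2]
    have h2 : ∫ x : ℝ, Cf * (b * (s / ((x - u) ^ 2 + s ^ 2))) = Cf * (b * π) := by
      rw [integral_const_mul, integral_const_mul, (poisson_int u s hs).2]
    rw [h1, ← h2]
    refine integral_mono hint_im (((poisson_int u s hs).1.const_mul b).const_mul Cf) ?_
    intro x
    dsimp only
    by_cases hx : x ∈ Set.Icc a b
    · have hP : 0 ≤ s / ((x - u) ^ 2 + s ^ 2) := by positivity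
      exact mul_le_mul (hf_bdd x) (mul_le_mul_of_nonneg_right hx.2 hP)
        (mul_nonneg (le_trans ha.le hx.1) hP) hCf
    · rw [hf_supp x hx, zero_mul]
      positivity
  -- bound on |J|
  have hJabs : ‖J‖ ≤ b / s := by
    have h1 : ‖J‖ ≤ ∫ x : ℝ, f x * (b / s) := by
      rw [hJ]
      refine norm_integral_le_of_norm_le (hfint.mul_const (b / s)) ?_
      filter_upwards with x
      rw [norm_smul, Real.norm_eq_abs, abs_of_nonneg (hf_nonneg x)]
      by_cases hx : x ∈ Set.Icc a b
      · exact mul_le_mul_of_nonneg_left (hh_bdd x hx) (hf_nonneg x)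
      · rw [hf_supp x hx, zero_mul, zero_mul]
    rw [integral_mul_const, hfone, one_mul] at h1
    exact h1
  -- Im t ≤ M
  have htimM : t.im ≤ M := by
    have h1 : t.im = (t + 1).im := by simp
    have h2 : (((y * (1 - c) : ℝ) : ℂ) * J).im = y * (1 - c) * J.im := by
      simp [Complex.mul_im]
    rw [h1, hkey2, h2]
    calc y * (1 - c) * J.im ≤ y * (1 - c) * (Cf * (b * π)) := by
          apply mul_le_mul_of_nonneg_left hJim
          positivity
      _ = M := by rw [hM]; ring
  -- lower bound on s
  have hsV : y * b / ε + 1 ≤ s := by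
    have hsim : s = z.im - t.im * σ ^ 2 := by
      rw [hsdef, hwdef]
      simp [Complex.sub_im, Complex.mul_im, ← Complex.ofReal_pow]
    have h5 : t.im * σ ^ 2 ≤ M * σ ^ 2 := mul_le_mul_of_nonneg_right htimM (sq_nonneg σ)
    rw [hsim]
    linarith
  -- |t+1| < ε
  have habs : ‖t + 1‖ < ε := by
    have h1 : ‖t + 1‖ ≤ y * b / s := by
      rw [hkey2, norm_mul, Complex.norm_real, Real.norm_eq_abs,
        abs_of_nonneg (mul_nonneg hy.le h1c.le : (0:ℝ) ≤ y * (1 - c))]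
      have hy1 : y * (1 - c) ≤ y * 1 := mul_le_mul_of_nonneg_left (by linarith) hy.le
      calc y * (1 - c) * ‖J‖ ≤ y * 1 * (b / s) :=
            mul_le_mul hy1 hJabs (norm_nonneg _) (by linarith)
        _ = y * b / s := by ring
    have hspos : 0 < s := hs
    have h2 : y * b / s < ε := by
      rw [div_lt_iff₀ hspos]
      have h3 : ε * (y * b / ε + 1) ≤ ε * s := mul_le_mul_of_nonneg_left hsV hε.le
      have h4 : ε * (y * b / ε + 1) = y * b + ε := by field_simp
      linarith
    linarith
  constructor
  · have h1 : t.im = (t + 1).im := by simp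
    rw [h1]
    exact lt_of_le_of_lt (Complex.abs_im_le_norm _) habs
  · have h1 : t.re + 1 = (t + 1).re := by simp
    rw [h1]
    exact lt_of_le_of_lt (Complex.abs_re_le_norm _) habs
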